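/- If g : ℝ → ℂ is C^p, T-periodic, and h = T/N for a positive integer N, then the periodic trapezoidal rule error satisfies | ∑_{n=1}^{N} g(nh)·h − ∫_0^T g(x) dx | ≤ C · N^{−p}, where C depends only on g and p. -/

import Mathlib

open intervalIntegral MeasureTheory Set


noncomputable def trapKer : ℕ → ℝ → ℝ
  | 0 => fun u => u - 1/2
  | (j+1) => fun u => (∫ s in (0:ℝ)..1, ∫ v in (0:ℝ)..s, trapKer j v)
      - ∫ v in (0:ℝ)..u, trapKer j v

lemma trapKer_cont (j : ℕ) : Continuous (trapKer j) := by
  induction j with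
  | zero => exact continuous_id.sub continuous_const
  | succ j ih =>
    have hprim : Continuous fun u : ℝ => ∫ v in (0:ℝ)..u, trapKer j v := by
      refine continuous_iff_continuousAt.2 fun u => ?_
      exact ((ih.integral_hasStrictDerivAt 0 u).hasDerivAt).continuousAt
    exact continuous_const.sub hprim

lemma trapKer_mean (j : ℕ) : (∫ u in (0:ℝ)..1, trapKer j u) = 0 := by
  induction j with
  | zero =>
    show (∫ u in (0:ℝ)..1, (u - 1/2)) = 0
    rw [intervalIntegral.integral_sub intervalIntegrable_id (intervalIntegrable_const)]
    simp
  | succ j ih =>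
    have hprim : Continuous fun u : ℝ => ∫ v in (0:ℝ)..u, trapKer j v := by
      refine continuous_iff_continuousAt.2 fun u => ?_
      exact (((trapKer_cont j).integral_hasStrictDerivAt 0 u).hasDerivAt).continuousAt
    show (∫ u in (0:ℝ)..1, ((∫ s in (0:ℝ)..1, ∫ v in (0:ℝ)..s, trapKer j v)
        - ∫ v in (0:ℝ)..u, trapKer j v)) = 0
    rw [intervalIntegral.integral_sub intervalIntegrable_const
      (hprim.intervalIntegrable 0 1)]
    simp

lemma trapKer_zero : trapKer 0 = fun u : ℝ => u - 1/2 := rfl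

lemma trapKer_succ (j : ℕ) : trapKer (j+1) = fun u =>
    (∫ s in (0:ℝ)..1, ∫ v in (0:ℝ)..s, trapKer j v) - ∫ v in (0:ℝ)..u, trapKer j v := rfl


lemma fract_comp_intervalIntegrable {f : ℝ → ℝ} (hf : Continuous f) {G : ℝ → ℂ}
    (hG : Continuous G) (h a b : ℝ) :
    IntervalIntegrable (fun t => f (Int.fract (t / h)) • G t) volume a b := by
  obtain ⟨M, hM⟩ := isCompact_Icc.exists_bound_of_continuousOn
    (hf.continuousOn : ContinuousOn f (Icc (0:ℝ) 1))
  have hmeas : Measurable fun t : ℝ => f (Int.fract (t / h)) • G t :=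
    ((hf.measurable.comp ((measurable_id.div_const h).fract))).smul hG.measurable
  have hdom : IntervalIntegrable (fun t => M * ‖G t‖) volume a b :=
    (continuous_const.mul hG.norm).intervalIntegrable a b
  rw [intervalIntegrable_iff] at hdom ⊢
  refine hdom.mono' hmeas.aestronglyMeasurable (Filter.Eventually.of_forall fun t => ?_)
  rw [norm_smul]
  have hfr : Int.fract (t / h) ∈ Icc (0:ℝ) 1 :=
    ⟨Int.fract_nonneg _, (Int.fract_lt_one _).le⟩
  calc ‖f (Int.fract (t / h))‖ * ‖G t‖ ≤ M * ‖G t‖ :=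
    mul_le_mul_of_nonneg_right (hM _ hfr) (norm_nonneg _)

lemma periodic_deriv_c {T : ℝ} {f : ℝ → ℂ} (hf : Function.Periodic f T) :
    Function.Periodic (deriv f) T := by
  intro x
  have hfun : (fun y => f (y + T)) = f := funext hf
  calc deriv f (x + T) = deriv (fun y => f (y + T)) x := (deriv_comp_add_const f T x).symm
    _ = deriv f x := by rw [hfun]

lemma periodic_iteratedDeriv {T : ℝ} {f : ℝ → ℂ} (hf : Function.Periodic f T) (m : ℕ) :
    Function.Periodic (iteratedDeriv m f) T := by
  induction m with
  | zero => simpa [iteratedDeriv_zero] using hf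
  | succ m ih => rw [iteratedDeriv_succ]; exact periodic_deriv_c ih


lemma hasDerivWithinAt_primitive_fract {K : ℝ → ℝ} (hK : Continuous K) {h : ℝ}
    (hh : 0 < h) (t : ℝ) :
    HasDerivWithinAt (fun t' => h * ∫ v in (0:ℝ)..(Int.fract (t'/h)), K v)
      (K (Int.fract (t/h))) (Set.Ioi t) t := by
  set n : ℤ := ⌊t/h⌋ with hn
  have hL : ∀ u : ℝ, HasDerivAt (fun u => ∫ v in (0:ℝ)..u, K v) (K u) u := fun u =>
    (hK.integral_hasStrictDerivAt 0 u).hasDerivAt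
  have hinner : HasDerivAt (fun t' : ℝ => t'/h - (n:ℝ)) (1/h) t := by
    simpa using ((hasDerivAt_id t).div_const h).sub_const (n:ℝ)
  have hΦ : HasDerivAt (fun t' => h * ∫ v in (0:ℝ)..(t'/h - (n:ℝ)), K v)
      (K (Int.fract (t/h))) t := by
    have := ((hL (t/h - (n:ℝ))).comp t hinner).const_mul h
    have hval : h * (K (t/h - (n:ℝ)) * (1/h)) = K (Int.fract (t/h)) := by
      rw [Int.fract]
      field_simp
      rw [← hn]
    rwa [hval] at this
  refine (hΦ.hasDerivWithinAt).congr_of_eventuallyEq ?_ ?_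
  · have ht : t < h * ((n:ℝ) + 1) := by
      have := Int.lt_floor_add_one (t/h)
      rw [div_lt_iff₀ hh] at this
      push_cast at this ⊢
      linarith [this]
    filter_upwards [Ioo_mem_nhdsGT_of_mem (Set.mem_Ico.2 ⟨le_refl t, ht⟩)] with t' ht'
    have h1 : (n:ℝ) ≤ t'/h := by
      have h0 : (n:ℝ) ≤ t/h := Int.floor_le _
      have h2 : t/h ≤ t'/h := by gcongr; exact ht'.1.le
      linarith
    have h2 : t'/h < (n:ℝ) + 1 := by
      rw [div_lt_iff₀ hh]; linarith [ht'.2]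
    have hfl : ⌊t'/h⌋ = n := by
      rw [Int.floor_eq_iff]
      · exact ⟨h1, by exact_mod_cast h2⟩
    have : Int.fract (t'/h) = t'/h - (n:ℝ) := by rw [Int.fract, hfl]
    rw [this]
  · have : Int.fract (t/h) = t/h - (n:ℝ) := by rw [Int.fract, hn]
    rw [this]


section
variable {g : ℝ → ℂ} {h : ℝ} {d1 : ℝ → ℂ}

lemma base_piece (hh : 0 < h) (hd1c : Continuous d1)
    (hg' : ∀ x, HasDerivAt g (d1 x) x) (i : ℕ) :
    h • g (((i:ℝ)+1) * h) - (∫ x in ((i:ℝ)*h)..(((i:ℝ)+1)*h), g x)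
      = ∫ t in ((i:ℝ)*h)..(((i:ℝ)+1)*h), (t - (i:ℝ)*h) • d1 t := by
  have hgc : Continuous g := by
    have : Differentiable ℝ g := fun x => (hg' x).differentiableAt
    exact this.continuous
  have hF : ∀ t ∈ uIcc ((i:ℝ)*h) (((i:ℝ)+1)*h),
      HasDerivAt (fun t => (t - (i:ℝ)*h) • g t) ((t - (i:ℝ)*h) • d1 t + g t) t := by
    intro t _
    have hc : HasDerivAt (fun t : ℝ => t - (i:ℝ)*h) 1 t := (hasDerivAt_id t).sub_const _
    have : HasDerivAt (fun t => (t - (i:ℝ)*h) • g t) ((t - (i:ℝ)*h) • d1 t + (1:ℝ) • g t) t :=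
      hc.smul (hg' t)
    simpa using this
  have hint : IntervalIntegrable (fun t => (t - (i:ℝ)*h) • d1 t + g t) volume
      ((i:ℝ)*h) (((i:ℝ)+1)*h) :=
    (((continuous_id.sub continuous_const).smul hd1c).add hgc).intervalIntegrable _ _
  have hftc := intervalIntegral.integral_eq_sub_of_hasDerivAt hF hint
  have hsplit : (∫ t in ((i:ℝ)*h)..(((i:ℝ)+1)*h), ((t - (i:ℝ)*h) • d1 t + g t))
      = (∫ t in ((i:ℝ)*h)..(((i:ℝ)+1)*h), (t - (i:ℝ)*h) • d1 t)
        + ∫ t in ((i:ℝ)*h)..(((i:ℝ)+1)*h), g t :=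
    intervalIntegral.integral_add
      (((continuous_id.sub continuous_const).smul hd1c).intervalIntegrable _ _)
      (hgc.intervalIntegrable _ _)
  rw [hsplit] at hftc
  have : (((i:ℝ)+1) * h - (i:ℝ)*h) = h := by ring
  rw [this] at hftc
  have h0 : ((i:ℝ)*h - (i:ℝ)*h) = 0 := by ring
  rw [h0, zero_smul, sub_zero] at hftc
  rw [← hftc]; abel
end

section
variable {h : ℝ} {d1 : ℝ → ℂ}

lemma base_congr (hh : 0 < h) (i : ℕ) :
    (∫ t in ((i:ℝ)*h)..(((i:ℝ)+1)*h), (t - (i:ℝ)*h) • d1 t)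
      = ∫ t in ((i:ℝ)*h)..(((i:ℝ)+1)*h), (h * Int.fract (t/h)) • d1 t := by
  apply intervalIntegral.integral_congr_ae
  have hne : ∀ᵐ t : ℝ, t ≠ ((i:ℝ)+1)*h := by
    rw [MeasureTheory.ae_iff]
    have : {t : ℝ | ¬ t ≠ ((i:ℝ)+1)*h} = {((i:ℝ)+1)*h} := by
      ext t; simp
    rw [this]
    exact Real.volume_singleton
  filter_upwards [hne] with t hne ht
  have hlt : (i:ℝ)*h < ((i:ℝ)+1)*h := by nlinarith
  rw [Set.uIoc_of_le hlt.le] at ht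
  have h1 : (i:ℝ) < t/h := by
    rw [lt_div_iff₀ hh]; linarith [ht.1]
  have h2 : t/h < (i:ℝ)+1 := by
    rw [div_lt_iff₀ hh]
    rcases lt_or_eq_of_le ht.2 with hlt2 | heq
    · linarith
    · exact absurd heq hne
  have hfl : ⌊t/h⌋ = (i:ℤ) := by
    rw [Int.floor_eq_iff]
    constructor
    · push_cast; linarith
    · push_cast; linarith
  have : Int.fract (t/h) = t/h - (i:ℝ) := by
    rw [Int.fract, hfl]; push_cast; ring
  have heq : h * (t/h - (i:ℝ)) = t - (i:ℝ)*h := by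
    field_simp
  rw [this, heq]
end

lemma sum_Icc_one_eq_range (f : ℕ → ℂ) (N : ℕ) :
    ∑ n ∈ Finset.Icc 1 N, f n = ∑ i ∈ Finset.range N, f (i+1) := by
  induction N with
  | zero => simp
  | succ N ih => rw [Finset.sum_range_succ, ← ih, Finset.sum_Icc_succ_top (by omega)]

lemma trap_invariant (T : ℝ) (hT : 0 < T) (p : ℕ) (g : ℝ → ℂ)
    (hg : ContDiff ℝ p g) (hper : Function.Periodic g T) (N : ℕ) (hN : 0 < N)
    (j : ℕ) (hj : j + 1 ≤ p) :
    (∑ n ∈ Finset.Icc 1 N, (T/(N:ℝ)) • g ((n:ℝ) * (T/N))) - (∫ x in (0:ℝ)..T, g x)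
      = (T/(N:ℝ))^(j+1) • ∫ t in (0:ℝ)..T,
          trapKer j (Int.fract (t / (T/N))) • iteratedDeriv (j+1) g t := by
  set h : ℝ := T / N with hdefh
  have hh : 0 < h := div_pos hT (by exact_mod_cast hN)
  have hNh : (N:ℝ) * h = T := by
    rw [hdefh]
    have : (N:ℝ) ≠ 0 := by exact_mod_cast hN.ne'
    field_simp
  have hTh : T / h = (N:ℝ) := by
    rw [← hNh]; field_simp
  have hcontD : ∀ m : ℕ, (m:ℕ) ≤ p → Continuous (iteratedDeriv m g) := fun m hm =>
    hg.continuous_iteratedDeriv m (by exact_mod_cast hm)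
  have hder : ∀ m : ℕ, m + 1 ≤ p → ∀ x, HasDerivAt (iteratedDeriv m g)
      (iteratedDeriv (m+1) g x) x := by
    intro m hm x
    have hdiff : Differentiable ℝ (iteratedDeriv m g) :=
      hg.differentiable_iteratedDeriv m (by exact_mod_cast hm)
    rw [iteratedDeriv_succ]
    exact (hdiff x).hasDerivAt
  have hperD : ∀ m : ℕ, Function.Periodic (iteratedDeriv m g) T :=
    periodic_iteratedDeriv hper
  have hint_zero : ∀ m : ℕ, m + 1 ≤ p → (∫ t in (0:ℝ)..T, iteratedDeriv (m+1) g t) = 0 := by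
    intro m hm
    rw [intervalIntegral.integral_eq_sub_of_hasDerivAt (fun x _ => hder m hm x)
      (((hcontD (m+1) hm)).intervalIntegrable 0 T)]
    have := hperD m 0
    rw [zero_add] at this
    rw [this, sub_self]
  induction j with
  | zero =>
    have hd1c : Continuous (iteratedDeriv 1 g) := hcontD 1 hj
    have hg' : ∀ x, HasDerivAt g (iteratedDeriv 1 g x) x := by
      have := hder 0 hj
      simpa [iteratedDeriv_zero] using this
    have hgc : Continuous g := hg.continuous
    have hadj : ∀ (F : ℝ → ℂ), (∀ a b : ℝ, IntervalIntegrable F volume a b) →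
        (∑ i ∈ Finset.range N, ∫ x in ((i:ℝ)*h)..(((i:ℝ)+1)*h), F x)
          = ∫ x in (0:ℝ)..T, F x := by
      intro F hF
      have := intervalIntegral.sum_integral_adjacent_intervals
        (a := fun i : ℕ => (i:ℝ)*h) (n := N) (fun k _ => hF _ _)
      simp only [Nat.cast_zero, zero_mul] at this
      rw [hNh] at this
      rw [← this]
      refine Finset.sum_congr rfl fun i _ => ?_
      have : ((i+1:ℕ):ℝ) = (i:ℝ)+1 := by push_cast; ring
      rw [this]
    have hL1 : (∑ n ∈ Finset.Icc 1 N, h • g ((n:ℝ) * h))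
        = ∑ i ∈ Finset.range N, h • g (((i:ℝ)+1) * h) := by
      rw [sum_Icc_one_eq_range (fun n => h • g ((n:ℝ) * h)) N]
      refine Finset.sum_congr rfl fun i _ => ?_
      have : ((i+1:ℕ):ℝ) = (i:ℝ)+1 := by push_cast; ring
      rw [this]
    rw [hL1, ← hadj g (fun a b => hgc.intervalIntegrable a b), ← Finset.sum_sub_distrib]
    have hterm : ∀ i ∈ Finset.range N,
        (h • g (((i:ℝ)+1) * h) - ∫ x in ((i:ℝ)*h)..(((i:ℝ)+1)*h), g x)
          = ∫ t in ((i:ℝ)*h)..(((i:ℝ)+1)*h), (h * Int.fract (t/h)) • iteratedDeriv 1 g t :=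
      fun i _ => (base_piece hh hd1c hg' i).trans (base_congr hh i)
    have hadj2 := hadj (fun t => (h * Int.fract (t / h)) • iteratedDeriv 1 g t)
      (fun a b => fract_comp_intervalIntegrable (f := fun u => h * u)
        (continuous_const.mul continuous_id) hd1c h a b)
    rw [Finset.sum_congr rfl hterm, hadj2]
    have hsplit : (∫ t in (0:ℝ)..T, (h * Int.fract (t/h)) • iteratedDeriv 1 g t)
        = (∫ t in (0:ℝ)..T, (h * trapKer 0 (Int.fract (t/h))) • iteratedDeriv 1 g t)
          + ∫ t in (0:ℝ)..T, ((h/2:ℝ)) • iteratedDeriv 1 g t := by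
      rw [← intervalIntegral.integral_add (g := fun t => (h/2:ℝ) • iteratedDeriv 1 g t)
        (fract_comp_intervalIntegrable (f := fun u => h * trapKer 0 u) (continuous_const.mul (trapKer_cont 0)) hd1c h 0 T)
        ((hd1c.const_smul (h/2:ℝ)).intervalIntegrable 0 T :
          IntervalIntegrable (fun t => (h/2:ℝ) • iteratedDeriv 1 g t) volume 0 T)]
      refine intervalIntegral.integral_congr fun t _ => ?_
      rw [trapKer_zero, ← add_smul]
      congr 1
      ring
    rw [hsplit, intervalIntegral.integral_smul, hint_zero 0 hj, smul_zero, add_zero]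
    have hpull : (∫ t in (0:ℝ)..T, (h * trapKer 0 (Int.fract (t/h))) • iteratedDeriv 1 g t)
        = h • ∫ t in (0:ℝ)..T, trapKer 0 (Int.fract (t/h)) • iteratedDeriv 1 g t := by
      rw [← intervalIntegral.integral_smul]
      refine intervalIntegral.integral_congr fun t _ => ?_
      rw [mul_smul]
    rw [hpull, pow_one]
  | succ j ih =>
    have hj' : j + 1 ≤ p := by omega
    have hIH := ih hj'
    have hKc : Continuous (trapKer j) := trapKer_cont j
    have hL0 : (∫ v in (0:ℝ)..(0:ℝ), trapKer j v) = 0 := intervalIntegral.integral_same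
    have hL1 : (∫ v in (0:ℝ)..(1:ℝ), trapKer j v) = 0 := trapKer_mean j
    have hLcont : Continuous fun u : ℝ => ∫ v in (0:ℝ)..u, trapKer j v := by
      refine continuous_iff_continuousAt.2 fun u => ?_
      exact ((hKc.integral_hasStrictDerivAt 0 u).hasDerivAt).continuousAt
    have hLfr : Continuous fun x : ℝ => ∫ v in (0:ℝ)..(Int.fract x), trapKer j v := by
      have := ContinuousOn.comp_fract'' (hLcont.continuousOn) (by rw [hL0, hL1])
      exact this
    have hdc : Continuous (iteratedDeriv (j+1) g) := hcontD (j+1) hj'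
    have hd'c : Continuous (iteratedDeriv (j+2) g) := hcontD (j+2) hj
    have hdd : ∀ x, HasDerivAt (iteratedDeriv (j+1) g) (iteratedDeriv (j+2) g x) x :=
      hder (j+1) hj
    have hΨder : ∀ t, HasDerivWithinAt
        (fun t' => h * ∫ v in (0:ℝ)..(Int.fract (t'/h)), trapKer j v)
        (trapKer j (Int.fract (t/h))) (Set.Ioi t) t :=
      fun t => hasDerivWithinAt_primitive_fract hKc hh t
    have hΨcont : Continuous fun t => h * ∫ v in (0:ℝ)..(Int.fract (t/h)), trapKer j v :=
      continuous_const.mul (hLfr.comp (continuous_id.div_const h))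
    have hΨ0 : (h * ∫ v in (0:ℝ)..(Int.fract ((0:ℝ)/h)), trapKer j v) = 0 := by
      rw [zero_div, Int.fract_zero, hL0, mul_zero]
    have hΨT : (h * ∫ v in (0:ℝ)..(Int.fract (T/h)), trapKer j v) = 0 := by
      rw [hTh, Int.fract_natCast, hL0, mul_zero]
    have hFder : ∀ t, HasDerivWithinAt
        (fun t => (h * ∫ v in (0:ℝ)..(Int.fract (t/h)), trapKer j v) • iteratedDeriv (j+1) g t)
        ((h * ∫ v in (0:ℝ)..(Int.fract (t/h)), trapKer j v) • iteratedDeriv (j+2) g t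
          + trapKer j (Int.fract (t/h)) • iteratedDeriv (j+1) g t) (Set.Ioi t) t :=
      fun t => (hΨder t).smul ((hdd t).hasDerivWithinAt)
    have hint1 : IntervalIntegrable
        (fun t => (h * ∫ v in (0:ℝ)..(Int.fract (t/h)), trapKer j v) • iteratedDeriv (j+2) g t)
        volume 0 T := (hΨcont.smul hd'c).intervalIntegrable 0 T
    have hint2 : IntervalIntegrable
        (fun t => trapKer j (Int.fract (t/h)) • iteratedDeriv (j+1) g t) volume 0 T :=
      fract_comp_intervalIntegrable hKc hdc h 0 T
    have hFTC := intervalIntegral.integral_eq_sub_of_hasDeriv_right_of_le hT.le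
      ((hΨcont.smul hdc).continuousOn) (fun x _ => hFder x) (hint1.add hint2)
    simp only [Pi.smul_apply'] at hFTC
    rw [hΨT, hΨ0, zero_smul, zero_smul, sub_self,
      intervalIntegral.integral_add hint1 hint2] at hFTC
    have hKd : (∫ t in (0:ℝ)..T, trapKer j (Int.fract (t/h)) • iteratedDeriv (j+1) g t)
        = - ∫ t in (0:ℝ)..T,
            (h * ∫ v in (0:ℝ)..(Int.fract (t/h)), trapKer j v) • iteratedDeriv (j+2) g t :=
      eq_neg_of_add_eq_zero_right hFTC
    have hc : ∀ u : ℝ, trapKer (j+1) u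
        = (∫ s in (0:ℝ)..1, ∫ v in (0:ℝ)..s, trapKer j v) - ∫ v in (0:ℝ)..u, trapKer j v := by
      intro u; rw [trapKer_succ]
    have hptw : ∀ t : ℝ, -((h * ∫ v in (0:ℝ)..(Int.fract (t/h)), trapKer j v)
          • iteratedDeriv (j+2) g t)
        = h • ((trapKer (j+1) (Int.fract (t/h))
            - (∫ s in (0:ℝ)..1, ∫ v in (0:ℝ)..s, trapKer j v)) • iteratedDeriv (j+2) g t) := by
      intro t
      rw [hc]
      module
    have hint3 : IntervalIntegrable
        (fun t => trapKer (j+1) (Int.fract (t/h)) • iteratedDeriv (j+2) g t) volume 0 T :=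
      fract_comp_intervalIntegrable (trapKer_cont (j+1)) hd'c h 0 T
    have hint4 : IntervalIntegrable
        (fun t => ((∫ s in (0:ℝ)..1, ∫ v in (0:ℝ)..s, trapKer j v) : ℝ)
          • iteratedDeriv (j+2) g t) volume 0 T :=
      (hd'c.const_smul (∫ s in (0:ℝ)..1, ∫ v in (0:ℝ)..s, trapKer j v)).intervalIntegrable 0 T
    have hneg : (∫ t in (0:ℝ)..T, trapKer j (Int.fract (t/h)) • iteratedDeriv (j+1) g t)
        = h • ∫ t in (0:ℝ)..T, trapKer (j+1) (Int.fract (t/h)) • iteratedDeriv (j+2) g t := by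
      rw [hKd, ← intervalIntegral.integral_neg,
        intervalIntegral.integral_congr (fun t _ => hptw t), intervalIntegral.integral_smul]
      congr 1
      have hsub : ∀ t : ℝ, (trapKer (j+1) (Int.fract (t/h))
            - (∫ s in (0:ℝ)..1, ∫ v in (0:ℝ)..s, trapKer j v)) • iteratedDeriv (j+2) g t
          = trapKer (j+1) (Int.fract (t/h)) • iteratedDeriv (j+2) g t
            - ((∫ s in (0:ℝ)..1, ∫ v in (0:ℝ)..s, trapKer j v) : ℝ)
              • iteratedDeriv (j+2) g t := fun t => sub_smul _ _ _
      rw [intervalIntegral.integral_congr (fun t _ => hsub t),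
        intervalIntegral.integral_sub hint3 hint4, intervalIntegral.integral_smul]
      have : (∫ t in (0:ℝ)..T, iteratedDeriv (j+2) g t) = 0 := hint_zero (j+1) hj
      rw [this, smul_zero, sub_zero]
    rw [hIH, hneg, smul_smul, ← pow_succ]


open intervalIntegral in
/-- Periodic trapezoidal rule: for a `C^p`, `T`-periodic function `g` and `h = T/N`,
`|∑_{n=1}^N g(nh) h - ∫_0^T g| ≤ C N^{-p}` with `C` depending only on `g` and `p`. -/
theorem periodic_trapezoidal_rule_error
    (T : ℝ) (hT : 0 < T) (p : ℕ) (g : ℝ → ℂ)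
    (hg : ContDiff ℝ p g) (hper : Function.Periodic g T) :
    ∃ C : ℝ, ∀ N : ℕ, 0 < N →
      ‖(∑ n ∈ Finset.Icc 1 N, g ((n : ℝ) * (T / N)) * ((T : ℂ) / N))
          - ∫ x in (0:ℝ)..T, g x‖ ≤ C / (N : ℝ) ^ p := by
  rcases Nat.eq_zero_or_pos p with hp | hp
  · subst hp
    have hgc : Continuous g := hg.continuous
    obtain ⟨B, hB⟩ := isCompact_Icc.exists_bound_of_continuousOn
      (hgc.continuousOn : ContinuousOn g (Icc 0 T))
    have hB0 : 0 ≤ B := le_trans (norm_nonneg (g 0)) (hB 0 ⟨le_refl 0, hT.le⟩)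
    refine ⟨2 * B * T, fun N hN => ?_⟩
    rw [pow_zero, div_one]
    have hNpos : (0:ℝ) < N := by exact_mod_cast hN
    have hsum : ‖∑ n ∈ Finset.Icc 1 N, g ((n : ℝ) * (T / N)) * ((T : ℂ) / N)‖ ≤ B * T := by
      calc ‖∑ n ∈ Finset.Icc 1 N, g ((n : ℝ) * (T / N)) * ((T : ℂ) / N)‖
          ≤ ∑ n ∈ Finset.Icc 1 N, ‖g ((n : ℝ) * (T / N)) * ((T : ℂ) / N)‖ :=
            norm_sum_le _ _
        _ ≤ ∑ n ∈ Finset.Icc 1 N, B * (T / N) := by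
            refine Finset.sum_le_sum fun n hn => ?_
            rw [norm_mul]
            have hn' := Finset.mem_Icc.1 hn
            have hmem : (n : ℝ) * (T / N) ∈ Icc (0:ℝ) T := by
              constructor
              · positivity
              · have h1 : (1:ℝ) ≤ (n:ℝ) := by exact_mod_cast hn'.1
                have h2 : (n:ℝ) ≤ (N:ℝ) := by exact_mod_cast hn'.2
                calc (n:ℝ) * (T / N) ≤ (N:ℝ) * (T / N) := by
                      apply mul_le_mul_of_nonneg_right h2; positivity
                  _ = T := by field_simp
            have hTN : ‖(T : ℂ) / N‖ = T / N := by
              rw [norm_div]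
              simp [abs_of_pos hT]
            rw [hTN]
            exact mul_le_mul_of_nonneg_right (hB _ hmem) (by positivity)
        _ = N * (B * (T / N)) := by
            simp [Nat.card_Icc, nsmul_eq_mul]
        _ = B * T := by field_simp
    have hint : ‖∫ x in (0:ℝ)..T, g x‖ ≤ B * T := by
      have := intervalIntegral.norm_integral_le_of_norm_le_const (C := B) (f := g)
        (a := 0) (b := T) (fun x hx => by
          rw [Set.uIoc_of_le hT.le] at hx
          exact hB x ⟨hx.1.le, hx.2⟩)
      calc ‖∫ x in (0:ℝ)..T, g x‖ ≤ B * |T - 0| := this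
        _ = B * T := by rw [sub_zero, abs_of_pos hT]
    calc ‖(∑ n ∈ Finset.Icc 1 N, g ((n : ℝ) * (T / N)) * ((T : ℂ) / N))
          - ∫ x in (0:ℝ)..T, g x‖
        ≤ ‖∑ n ∈ Finset.Icc 1 N, g ((n : ℝ) * (T / N)) * ((T : ℂ) / N)‖
          + ‖∫ x in (0:ℝ)..T, g x‖ := norm_sub_le _ _
      _ ≤ B * T + B * T := add_le_add hsum hint
      _ = 2 * B * T := by ring
  · obtain ⟨M, hM⟩ := isCompact_Icc.exists_bound_of_continuousOn
      ((trapKer_cont (p-1)).continuousOn : ContinuousOn (trapKer (p-1)) (Icc 0 1))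
    have hM0 : 0 ≤ M := le_trans (norm_nonneg _) (hM 0 ⟨le_refl 0, zero_le_one⟩)
    have hdpc : Continuous (iteratedDeriv p g) := hg.continuous_iteratedDeriv p le_rfl
    obtain ⟨B, hB⟩ := isCompact_Icc.exists_bound_of_continuousOn
      (hdpc.continuousOn : ContinuousOn (iteratedDeriv p g) (Icc 0 T))
    have hB0 : 0 ≤ B := le_trans (norm_nonneg _) (hB 0 ⟨le_refl 0, hT.le⟩)
    refine ⟨M * B * T * T ^ p, fun N hN => ?_⟩
    have hNpos : (0:ℝ) < N := by exact_mod_cast hN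
    have hinv := trap_invariant T hT p g hg hper N hN (p-1) (by omega)
    have hp1 : p - 1 + 1 = p := by omega
    rw [hp1] at hinv
    have hconv : ∀ n : ℕ, g ((n:ℝ) * (T/N)) * ((T:ℂ)/N)
        = (T/(N:ℝ)) • g ((n:ℝ) * (T/N)) := by
      intro n
      rw [Complex.real_smul]
      push_cast
      ring
    rw [Finset.sum_congr rfl (fun n _ => hconv n), hinv, norm_smul]
    have hh : 0 < T / (N:ℝ) := div_pos hT hNpos
    have hnp : ‖(T/(N:ℝ))^p‖ = (T/(N:ℝ))^p := by
      rw [Real.norm_eq_abs, abs_of_pos (pow_pos hh p)]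
    rw [hnp]
    have hintb : ‖∫ t in (0:ℝ)..T,
        trapKer (p-1) (Int.fract (t / (T/N))) • iteratedDeriv p g t‖ ≤ M * B * T := by
      have := intervalIntegral.norm_integral_le_of_norm_le_const (C := M * B)
        (f := fun t => trapKer (p-1) (Int.fract (t / (T/N))) • iteratedDeriv p g t)
        (a := 0) (b := T) (fun x hx => by
          rw [Set.uIoc_of_le hT.le] at hx
          rw [norm_smul]
          have h1 : ‖trapKer (p-1) (Int.fract (x / (T/N)))‖ ≤ M :=
            hM _ ⟨Int.fract_nonneg _, (Int.fract_lt_one _).le⟩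
          have h2 : ‖iteratedDeriv p g x‖ ≤ B := hB x ⟨hx.1.le, hx.2⟩
          exact mul_le_mul h1 h2 (norm_nonneg _) hM0)
      calc ‖∫ t in (0:ℝ)..T, trapKer (p-1) (Int.fract (t / (T/N))) • iteratedDeriv p g t‖
          ≤ M * B * |T - 0| := this
        _ = M * B * T := by rw [sub_zero, abs_of_pos hT]
    calc (T/(N:ℝ))^p * ‖∫ t in (0:ℝ)..T,
          trapKer (p-1) (Int.fract (t / (T/N))) • iteratedDeriv p g t‖
        ≤ (T/(N:ℝ))^p * (M * B * T) := by
          apply mul_le_mul_of_nonneg_left hintb (by positivity)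
      _ = M * B * T * T ^ p / (N:ℝ)^p := by
          rw [div_pow]; ring
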